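/- For any U ∈ R^{n×d} with orthonormal columns, there exists a finite set X ⊂ R^n with |X| ≤ 9^d, each element of norm at most 1, such that for every matrix Π with n columns: ‖(ΠU)ᵀ(ΠU) − I‖ ≤ 2·sup_{x∈X} |‖Πx‖² − 1|. -/

import Mathlib

open Matrix MeasureTheory

noncomputable def opNorm {α β : Type} [Fintype α] [Fintype β] [DecidableEq β]
    (A : Matrix α β ℝ) : ℝ :=
  ‖LinearMap.toContinuousLinearMap (Matrix.toEuclideanLin A)‖

noncomputable def frobNorm {α β : Type} [Fintype α] [Fintype β] (A : Matrix α β ℝ) : ℝ :=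
  Real.sqrt (∑ i, ∑ j, A i j ^ 2)

open Metric
open scoped ENNReal NNReal

local notation "⟪" x ", " y "⟫" => @inner ℝ _ _ x y

/-- Norm bound for symmetric operators via the quadratic form. -/
lemma normle_of_quad {E : Type*} [NormedAddCommGroup E] [InnerProductSpace ℝ E]
    (T : E →L[ℝ] E) (hsym : ∀ x y : E, ⟪T x, y⟫ = ⟪x, T y⟫) {M : ℝ} (hM : 0 ≤ M)
    (hQ : ∀ z : E, |⟪T z, z⟫| ≤ M * ‖z‖ ^ 2) : ‖T‖ ≤ M := by
  refine T.opNorm_le_bound hM (fun x => ?_)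
  rcases eq_or_ne (T x) 0 with h0 | h0
  · rw [h0]; simpa using mul_nonneg hM (norm_nonneg x)
  have hx : x ≠ 0 := by rintro rfl; simp at h0
  have hTx : (0:ℝ) < ‖T x‖ := norm_pos_iff.2 h0
  have hxn : (0:ℝ) < ‖x‖ := norm_pos_iff.2 hx
  set y : E := (‖x‖ / ‖T x‖) • T x with hy
  have hyn : ‖y‖ = ‖x‖ := by
    rw [hy, norm_smul, Real.norm_eq_abs, abs_div, abs_of_nonneg (norm_nonneg x),
      abs_of_nonneg (norm_nonneg (T x)), div_mul_cancel₀]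
    exact hTx.ne'
  have hinner : ⟪T x, y⟫ = ‖x‖ * ‖T x‖ := by
    rw [hy, real_inner_smul_right, real_inner_self_eq_norm_sq]
    field_simp
  have hpol : 4 * ⟪T x, y⟫ = ⟪T (x + y), x + y⟫ - ⟪T (x - y), x - y⟫ := by
    have h1 : ⟪T y, x⟫ = ⟪T x, y⟫ := by rw [real_inner_comm]; exact (hsym x y).symm
    simp only [map_add, map_sub, inner_add_left, inner_add_right, inner_sub_left,
      inner_sub_right, h1]
    ring
  have hpar : ‖x + y‖ ^ 2 + ‖x - y‖ ^ 2 = 4 * ‖x‖ ^ 2 := by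
    have := parallelogram_law_with_norm ℝ x y
    nlinarith [hyn]
  have key : 4 * (‖x‖ * ‖T x‖) ≤ M * (4 * ‖x‖ ^ 2) := by
    calc 4 * (‖x‖ * ‖T x‖) = ⟪T (x + y), x + y⟫ - ⟪T (x - y), x - y⟫ := by
          rw [← hinner, ← hpol]
      _ ≤ |⟪T (x + y), x + y⟫| + |⟪T (x - y), x - y⟫| := by
          have h1 := neg_abs_le (⟪T (x-y), x-y⟫); have h2 := le_abs_self (⟪T (x+y), x+y⟫); linarith
      _ ≤ M * ‖x + y‖ ^ 2 + M * ‖x - y‖ ^ 2 := add_le_add (hQ _) (hQ _)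
      _ = M * (4 * ‖x‖ ^ 2) := by rw [← mul_add, hpar]
  nlinarith

/-- Volume packing bound: a (1/4)-separated subset of the unit sphere has at most `9^d` points. -/
lemma sep_card_le {d : ℕ} (hd : d ≠ 0) (F : Finset (EuclideanSpace ℝ (Fin d)))
    (hsph : ∀ y ∈ F, ‖y‖ = 1)
    (hsep : ∀ x ∈ F, ∀ y ∈ F, x ≠ y → 1/4 ≤ dist x y) : F.card ≤ 9 ^ d := by
  haveI : NeZero d := ⟨hd⟩
  haveI : Nontrivial (EuclideanSpace ℝ (Fin d)) := by
    have : 1 ≤ d := Nat.one_le_iff_ne_zero.2 hd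
    infer_instance
  set μ : Measure (EuclideanSpace ℝ (Fin d)) := volume with hμ
  set v := μ (ball (0 : (EuclideanSpace ℝ (Fin d))) 1) with hv
  have hv0 : v ≠ 0 := (measure_ball_pos μ _ one_pos).ne'
  have hvt : v ≠ ⊤ := measure_ball_lt_top.ne
  have hball : ∀ y : (EuclideanSpace ℝ (Fin d)),
      μ (ball y (1/8)) = ENNReal.ofReal ((1/8 : ℝ) ^ d) * v := by
    intro y
    rw [Measure.addHaar_ball μ y (by norm_num : (0:ℝ) ≤ 1/8), finrank_euclideanSpace_fin]
  have hdisj : (F : Set (EuclideanSpace ℝ (Fin d))).PairwiseDisjoint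
      (fun y => ball y (1/8 : ℝ)) := by
    intro x hx y hy hxy
    exact ball_disjoint_ball (by have := hsep x hx y hy hxy; linarith)
  have hsub : (⋃ y ∈ F, ball y (1/8 : ℝ)) ⊆ ball (0 : (EuclideanSpace ℝ (Fin d))) (9/8) := by
    intro z hz
    simp only [Set.mem_iUnion, mem_ball] at hz ⊢
    obtain ⟨y, hy, hzy⟩ := hz
    have : dist y 0 = 1 := by rw [dist_zero_right]; exact hsph y hy
    calc dist z 0 ≤ dist z y + dist y 0 := dist_triangle _ _ _
      _ < 9/8 := by rw [this]; linarith
  have hsum : μ (⋃ y ∈ F, ball y (1/8 : ℝ)) = F.card * (ENNReal.ofReal ((1/8:ℝ) ^ d) * v) := by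
    rw [measure_biUnion_finset hdisj (fun y _ => measurableSet_ball)]
    simp only [hball, Finset.sum_const, nsmul_eq_mul]
  have hbig : μ (ball (0 : (EuclideanSpace ℝ (Fin d))) (9/8))
      = ENNReal.ofReal ((9/8 : ℝ) ^ d) * v := by
    rw [Measure.addHaar_ball μ _ (by norm_num : (0:ℝ) ≤ 9/8), finrank_euclideanSpace_fin]
  have hle : (F.card : ℝ≥0∞) * (ENNReal.ofReal ((1/8:ℝ) ^ d) * v)
      ≤ ENNReal.ofReal ((9/8 : ℝ) ^ d) * v := by
    rw [← hsum, ← hbig]; exact measure_mono hsub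
  have hfactor : ENNReal.ofReal ((9/8 : ℝ) ^ d)
      = (9 : ℝ≥0∞) ^ d * ENNReal.ofReal ((1/8:ℝ) ^ d) := by
    have h9' : (9 : ℝ≥0∞) ^ d = ENNReal.ofReal ((9:ℝ) ^ d) := by
      rw [ENNReal.ofReal_pow (by norm_num)]; norm_num
    rw [h9', ← ENNReal.ofReal_mul (by positivity)]
    congr 1; rw [← mul_pow]; norm_num
  have hc0 : ENNReal.ofReal ((1/8:ℝ) ^ d) * v ≠ 0 :=
    mul_ne_zero (by positivity) hv0
  have hct : ENNReal.ofReal ((1/8:ℝ) ^ d) * v ≠ ⊤ :=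
    ENNReal.mul_ne_top ENNReal.ofReal_ne_top hvt
  have : (F.card : ℝ≥0∞) ≤ (9 : ℝ≥0∞) ^ d := by
    rw [hfactor, mul_assoc] at hle
    exact (ENNReal.mul_le_mul_iff_left hc0 hct).mp hle
  have h9 : ((9 ^ d : ℕ) : ℝ≥0∞) = (9 : ℝ≥0∞) ^ d := by push_cast; ring
  rw [← h9, Nat.cast_le] at this
  exact this

/-- Existence of a (1/4)-net of the unit sphere of `ℝ^d` with at most `9^d` points. -/
lemma exists_net {d : ℕ} (hd : d ≠ 0) :
    ∃ T : Finset (EuclideanSpace ℝ (Fin d)), T.card ≤ 9 ^ d ∧ (∀ y ∈ T, ‖y‖ = 1) ∧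
      ∀ x : EuclideanSpace ℝ (Fin d), ‖x‖ = 1 → ∃ y ∈ T, dist x y ≤ 1/4 := by
  classical
  set P : ℕ → Prop := fun k => ∃ F : Finset (EuclideanSpace ℝ (Fin d)),
    (∀ y ∈ F, ‖y‖ = 1) ∧ (∀ x ∈ F, ∀ y ∈ F, x ≠ y → 1/4 ≤ dist x y) ∧ F.card = k with hP
  have hP0 : P 0 := ⟨∅, by simp, by simp, rfl⟩
  set k := Nat.findGreatest P (9 ^ d) with hk
  have hPk : P k := Nat.findGreatest_spec (Nat.zero_le _) hP0
  obtain ⟨F, hFs, hFsep, hFcard⟩ := hPk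
  refine ⟨F, ?_, hFs, ?_⟩
  · rw [hFcard]; exact Nat.findGreatest_le _
  intro x hx
  by_contra hcon
  push_neg at hcon
  have hxF : x ∉ F := by
    intro h
    have := hcon x h
    rw [dist_self] at this
    norm_num at this
  have hP1 : P (k + 1) := by
    refine ⟨insert x F, ?_, ?_, ?_⟩
    · intro y hy
      rcases Finset.mem_insert.1 hy with rfl | hy
      · exact hx
      · exact hFs y hy
    · intro a ha b hb hab
      rcases Finset.mem_insert.1 ha with ha' | ha' <;> rcases Finset.mem_insert.1 hb with hb' | hb'
      · exact absurd (ha'.trans hb'.symm) hab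
      · subst ha'; exact le_of_lt (hcon b hb')
      · subst hb'; rw [dist_comm]; exact le_of_lt (hcon a ha')
      · exact hFsep a ha' b hb' hab
    · rw [Finset.card_insert_of_notMem hxF, hFcard]
  have hcard : k + 1 ≤ 9 ^ d := by
    obtain ⟨F', h1, h2, h3⟩ := hP1
    rw [← h3]; exact sep_card_le hd F' h1 h2
  exact Nat.findGreatest_is_greatest (Nat.lt_succ_self k) hcard hP1

lemma toEucLin_mul {l m p : ℕ} (A : Matrix (Fin l) (Fin m) ℝ) (B : Matrix (Fin m) (Fin p) ℝ)
    (x : EuclideanSpace ℝ (Fin p)) :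
    Matrix.toEuclideanLin (A * B) x = Matrix.toEuclideanLin A (Matrix.toEuclideanLin B x) := by
  simp [Matrix.toEuclideanLin_apply, Matrix.mulVec_mulVec]

lemma toEucLin_one {k : ℕ} (x : EuclideanSpace ℝ (Fin k)) :
    Matrix.toEuclideanLin (1 : Matrix (Fin k) (Fin k) ℝ) x = x := by
  simp [Matrix.toEuclideanLin_apply]

lemma transpose_eq_conjTranspose {l m : ℕ} (A : Matrix (Fin l) (Fin m) ℝ) : Aᵀ = Aᴴ := by
  ext i j; simp [Matrix.conjTranspose_apply]

lemma inner_toEucLin_transpose_mul {l m : ℕ} (A : Matrix (Fin l) (Fin m) ℝ)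
    (y : EuclideanSpace ℝ (Fin m)) :
    ⟪y, Matrix.toEuclideanLin (Aᵀ * A) y⟫ = ‖Matrix.toEuclideanLin A y‖ ^ 2 := by
  rw [toEucLin_mul, transpose_eq_conjTranspose,
    Matrix.toEuclideanLin_conjTranspose_eq_adjoint, LinearMap.adjoint_inner_right,
    real_inner_self_eq_norm_sq]

set_option maxHeartbeats 1000000 in
/-- a net of size at most `9^d` suffices to control
`‖(ΠU)ᵀ(ΠU) − I‖` by twice the worst JL distortion over the net. -/
theorem stmt7 {n d : ℕ} (U : Matrix (Fin n) (Fin d) ℝ) (hU : Uᵀ * U = 1) :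
    ∃ X : Finset (EuclideanSpace ℝ (Fin n)), X.card ≤ 9 ^ d ∧ (∀ x ∈ X, ‖x‖ ≤ 1) ∧
      ∀ (m : ℕ) (Φ : Matrix (Fin m) (Fin n) ℝ) (s : ℝ),
        (∀ x ∈ X, |‖Matrix.toEuclideanLin Φ x‖ ^ 2 - 1| ≤ s) →
        opNorm ((Φ * U)ᵀ * (Φ * U) - 1) ≤ 2 * s := by
  classical
  rcases eq_or_ne d 0 with rfl | hd
  · refine ⟨{(0 : EuclideanSpace ℝ (Fin n))}, by simp, by simp, ?_⟩
    intro m Φ s hs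
    have h1 : (1:ℝ) ≤ s := by
      have := hs 0 (Finset.mem_singleton_self _)
      simpa using this
    have h0 : opNorm ((Φ * U)ᵀ * (Φ * U) - 1) = 0 := by
      unfold opNorm
      set f := LinearMap.toContinuousLinearMap (Matrix.toEuclideanLin ((Φ * U)ᵀ * (Φ * U) - 1))
        with hf
      refine le_antisymm (f.opNorm_le_bound le_rfl (fun x => ?_)) (norm_nonneg _)
      have hx0 : x = 0 := Subsingleton.elim x 0
      rw [hx0]
      simp
    rw [h0]; linarith
  obtain ⟨T, hTcard, hTsph, hTnet⟩ := exists_net hd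
  -- the linear map of U preserves norms
  have hUnorm : ∀ y : EuclideanSpace ℝ (Fin d), ‖Matrix.toEuclideanLin U y‖ = ‖y‖ := by
    intro y
    have h := inner_toEucLin_transpose_mul U y
    rw [hU, toEucLin_one, real_inner_self_eq_norm_sq] at h
    nlinarith [norm_nonneg (Matrix.toEuclideanLin U y), norm_nonneg y]
  refine ⟨T.image (fun y => Matrix.toEuclideanLin U y),
    le_trans Finset.card_image_le hTcard, ?_, ?_⟩
  · intro x hx
    obtain ⟨y, hy, rfl⟩ := Finset.mem_image.1 hx
    rw [hUnorm, hTsph y hy]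
  intro m Φ s hs
  set A : Matrix (Fin d) (Fin d) ℝ := (Φ * U)ᵀ * (Φ * U) - 1 with hA
  set L := Matrix.toEuclideanLin A with hL
  set C := LinearMap.toContinuousLinearMap L with hC
  have hCL : ∀ z, C z = L z := fun z => rfl
  set N := ‖C‖ with hN
  have hgoal : opNorm A = N := rfl
  -- quadratic form identity
  have hQ : ∀ y : EuclideanSpace ℝ (Fin d),
      ⟪y, L y⟫ = ‖Matrix.toEuclideanLin Φ (Matrix.toEuclideanLin U y)‖ ^ 2 - ‖y‖ ^ 2 := by
    intro y
    have : L y = Matrix.toEuclideanLin ((Φ * U)ᵀ * (Φ * U)) y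
        - Matrix.toEuclideanLin (1 : Matrix (Fin d) (Fin d) ℝ) y := by
      rw [hL, hA, map_sub]; rfl
    rw [this, inner_sub_right, inner_toEucLin_transpose_mul, toEucLin_one,
      real_inner_self_eq_norm_sq, toEucLin_mul]
  -- symmetry
  have hsymm : ∀ x y : EuclideanSpace ℝ (Fin d), ⟪C x, y⟫ = ⟪x, C y⟫ := by
    have hherm : A.IsHermitian := by
      rw [Matrix.IsHermitian, ← transpose_eq_conjTranspose, hA]
      rw [Matrix.transpose_sub, Matrix.transpose_mul, Matrix.transpose_transpose,
        Matrix.transpose_one]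
    have := (Matrix.isHermitian_iff_isSymmetric).1 hherm
    intro x y
    rw [hCL, hCL]
    exact this x y
  -- the net controls the quadratic form
  have hQT : ∀ y ∈ T, |⟪y, L y⟫| ≤ s := by
    intro y hy
    have hmem : Matrix.toEuclideanLin U y ∈ T.image (fun y => Matrix.toEuclideanLin U y) :=
      Finset.mem_image_of_mem _ hy
    have := hs _ hmem
    rw [hQ, hTsph y hy]
    simpa using this
  -- s is nonnegative
  have hs0 : 0 ≤ s := by
    have hne : ∃ y, y ∈ T := by
      have h1 : (0:ℝ) < 1 := one_pos
      have : ‖(EuclideanSpace.single (⟨0, Nat.pos_of_ne_zero hd⟩ : Fin d) (1:ℝ))‖ = 1 := by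
        rw [EuclideanSpace.norm_single]; norm_num
      obtain ⟨y, hy, _⟩ := hTnet _ this
      exact ⟨y, hy⟩
    obtain ⟨y, hy⟩ := hne
    exact le_trans (abs_nonneg _) (hQT y hy)
  have hN0 : 0 ≤ N := norm_nonneg _
  -- the net controls unit vectors
  have hunit : ∀ z : EuclideanSpace ℝ (Fin d), ‖z‖ = 1 → |⟪C z, z⟫| ≤ s + N / 2 := by
    intro z hz
    obtain ⟨y, hy, hzy⟩ := hTnet z hz
    have hy1 : ‖y‖ = 1 := hTsph y hy
    have hdecomp : ⟪z, L z⟫ - ⟪y, L y⟫ = ⟪z - y, L z⟫ + ⟪y, L (z - y)⟫ := by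
      rw [map_sub]
      simp only [inner_sub_left, inner_sub_right]
      ring
    have hb1 : |⟪z - y, L z⟫| ≤ N / 4 := by
      calc |⟪z - y, L z⟫| ≤ ‖z - y‖ * ‖L z‖ := abs_real_inner_le_norm _ _
        _ ≤ (1/4) * (N * 1) := by
            refine mul_le_mul ?_ ?_ (norm_nonneg _) (by norm_num)
            · rw [← dist_eq_norm]; exact hzy
            · calc ‖L z‖ = ‖C z‖ := rfl
                _ ≤ N * ‖z‖ := C.le_opNorm z
                _ = N * 1 := by rw [hz]
        _ = N / 4 := by ring
    have hb2 : |⟪y, L (z - y)⟫| ≤ N / 4 := by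
      calc |⟪y, L (z - y)⟫| ≤ ‖y‖ * ‖L (z - y)‖ := abs_real_inner_le_norm _ _
        _ ≤ 1 * (N * (1/4)) := by
            refine mul_le_mul (le_of_eq hy1) ?_ (norm_nonneg _) (by norm_num)
            calc ‖L (z - y)‖ = ‖C (z - y)‖ := rfl
              _ ≤ N * ‖z - y‖ := C.le_opNorm _
              _ ≤ N * (1/4) := by
                  refine mul_le_mul_of_nonneg_left ?_ hN0
                  rw [← dist_eq_norm]; exact hzy
        _ = N / 4 := by ring
    have h1 : |⟪z, L z⟫| ≤ |⟪y, L y⟫| + N / 2 := by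
      have := abs_sub_abs_le_abs_sub (⟪z, L z⟫) (⟪y, L y⟫)
      have h2 : |⟪z, L z⟫ - ⟪y, L y⟫| ≤ N / 2 := by
        rw [hdecomp]
        calc |⟪z - y, L z⟫ + ⟪y, L (z - y)⟫| ≤ |⟪z - y, L z⟫| + |⟪y, L (z - y)⟫| := abs_add_le _ _
          _ ≤ N / 4 + N / 4 := add_le_add hb1 hb2
          _ = N / 2 := by ring
      linarith
    have hCz : ⟪C z, z⟫ = ⟪z, L z⟫ := by rw [hCL, real_inner_comm]
    rw [hCz]
    exact le_trans h1 (by have := hQT y hy; linarith)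
  -- extend to all vectors by homogeneity
  have hquad : ∀ z : EuclideanSpace ℝ (Fin d), |⟪C z, z⟫| ≤ (s + N / 2) * ‖z‖ ^ 2 := by
    intro z
    rcases eq_or_ne z 0 with rfl | hz0
    · simp
    have hzn : (0:ℝ) < ‖z‖ := norm_pos_iff.2 hz0
    set w : EuclideanSpace ℝ (Fin d) := ‖z‖⁻¹ • z with hw
    have hw1 : ‖w‖ = 1 := by
      rw [hw, norm_smul, Real.norm_eq_abs, abs_inv, abs_of_nonneg (norm_nonneg z),
        inv_mul_cancel₀ hzn.ne']
    have hscale : ⟪C z, z⟫ = ‖z‖ ^ 2 * ⟪C w, w⟫ := by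
      rw [hw, C.map_smul, real_inner_smul_left, real_inner_smul_right]
      field_simp
    rw [hscale, abs_mul, abs_of_nonneg (by positivity : (0:ℝ) ≤ ‖z‖ ^ 2), mul_comm]
    exact mul_le_mul_of_nonneg_right (hunit w hw1) (by positivity)
  have hfin : N ≤ s + N / 2 := normle_of_quad C hsymm (by linarith) hquad
  rw [hgoal]; linarith
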